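/- Let G be a graph on n vertices with k = ⌊n/2⌋, and define σ_k(G) = Σ_{v∈V(G)} C(n−|N[v]|, k)/C(n,k) and σ(G) = Σ_{v∈V(G)} 2^{−deg(v)−1}. Then σ_k(G) ≤ 2σ(G). -/
import Mathlib


open Finset

/-- The closed neighborhood of a vertex as a `Finset`. -/
def closedNbhd {V : Type*} [Fintype V] [DecidableEq V] (G : SimpleGraph V)
    [DecidableRel G.Adj] (v : V) : Finset V :=
  insert v (G.neighborFinset v)

lemma choose_succ_le_choose_aux {a j : ℕ} (h : a ≤ 2 * j + 1) :
    a.choose (j + 1) ≤ a.choose j := by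
  have key := Nat.choose_succ_right_eq a j
  have h2 : a - j ≤ j + 1 := by omega
  have : a.choose (j + 1) * (j + 1) ≤ a.choose j * (j + 1) := by
    calc a.choose (j + 1) * (j + 1) = a.choose j * (a - j) := key
    _ ≤ a.choose j * (j + 1) := Nat.mul_le_mul_left _ h2
  exact Nat.le_of_mul_le_mul_right this (Nat.succ_pos j)

lemma two_mul_choose_le {a j : ℕ} (h : a ≤ 2 * j + 1) :
    2 * a.choose (j + 1) ≤ (a + 1).choose (j + 1) := by
  rw [Nat.choose_succ_succ, two_mul]
  exact Nat.add_le_add_right (choose_succ_le_choose_aux h) _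

lemma key_nat (n : ℕ) : ∀ m, 1 ≤ m → m ≤ n →
    2 ^ (m - 1) * (n - m).choose (n / 2) ≤ n.choose (n / 2) := by
  intro m
  induction m with
  | zero => intro h; omega
  | succ m ih =>
    intro _ hmn
    rcases Nat.eq_zero_or_pos m with hm | hm
    · subst hm
      simpa using Nat.choose_le_choose (n / 2) (Nat.sub_le n 1)
    · have hstep : 2 * (n - (m + 1)).choose (n / 2) ≤ (n - m).choose (n / 2) := by
        have h1 : n - (m + 1) ≤ 2 * (n / 2 - 1) + 1 := by omega
        have h2 : n - (m + 1) + 1 = n - m := by omega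
        have hk : n / 2 = (n / 2 - 1) + 1 := by omega
        rw [hk, ← h2]
        exact two_mul_choose_le h1
      have := ih hm (by omega)
      calc 2 ^ (m + 1 - 1) * (n - (m + 1)).choose (n / 2)
          = 2 ^ (m - 1) * (2 * (n - (m + 1)).choose (n / 2)) := by
            rw [← mul_assoc, ← pow_succ]
            congr 2
            omega
        _ ≤ 2 ^ (m - 1) * (n - m).choose (n / 2) := Nat.mul_le_mul_left _ hstep
        _ ≤ n.choose (n / 2) := this

/-- With `k = ⌊n/2⌋`, `σ_k(G) = Σ_v C(n-|N[v]|,k)/C(n,k)` is at most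
`2 σ(G) = 2 Σ_v 2^{-deg(v)-1}`. -/
theorem sigma_k_le_two_sigma {V : Type*} [Fintype V] [DecidableEq V] [Nonempty V]
    (G : SimpleGraph V) [DecidableRel G.Adj] :
    letI n : ℕ := Fintype.card V
    letI k : ℕ := n / 2
    (∑ v : V, ((n - (closedNbhd G v).card).choose k : ℚ) / (n.choose k : ℚ))
      ≤ 2 * ∑ v : V, (2 : ℚ) ^ (-(G.degree v : ℤ) - 1) := by
  set n := Fintype.card V with hn
  set k := n / 2 with hk
  rw [Finset.mul_sum]
  apply Finset.sum_le_sum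
  intro v _
  have hcard : (closedNbhd G v).card = G.degree v + 1 := by
    rw [closedNbhd, Finset.card_insert_of_notMem (G.notMem_neighborFinset_self v),
      SimpleGraph.card_neighborFinset_eq_degree]
  set d := G.degree v with hd
  have hle : d + 1 ≤ n := by
    rw [← hcard]; exact Finset.card_le_univ _
  have hnat : 2 ^ d * (n - (d + 1)).choose k ≤ n.choose k := by
    simpa using key_nat n (d + 1) (by omega) hle
  have hq : (2 : ℚ) ^ d * ((n - (d + 1)).choose k : ℚ) ≤ (n.choose k : ℚ) := by
    exact_mod_cast hnat
  have hpos : (0 : ℚ) < (n.choose k : ℚ) := by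
    exact_mod_cast Nat.choose_pos (Nat.div_le_self n 2)
  have hzpow : (2 : ℚ) ^ (-(d : ℤ) - 1) = ((2 : ℚ) ^ (d + 1))⁻¹ := by
    rw [show -(d : ℤ) - 1 = -((d + 1 : ℕ) : ℤ) by push_cast; ring, zpow_neg, zpow_natCast]
  rw [hcard, hzpow, div_le_iff₀ hpos]
  have h2pos : (0 : ℚ) < 2 ^ (d + 1) := by positivity
  have hps : (2 : ℚ) ^ (d + 1) = 2 ^ d * 2 := pow_succ 2 d
  rw [mul_comm (2 : ℚ), mul_assoc, inv_mul_eq_div, le_div_iff₀ h2pos]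
  nlinarith [hq, hpos]
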